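/- Let 𝓗 be a complex Hilbert space, let H₁ and H₂ be bounded self-adjoint operators on 𝓗, and let O be a bounded operator on 𝓗. Then for every t ≥ 0: ‖τ_t^{H₁}(O) − τ_t^{H₂}(O)‖ ≤ ∫_0^t ‖[τ_s^{H₂}(O), H₁ − H₂]‖ ds. -/

import Mathlib

open MeasureTheory intervalIntegral
set_option synthInstance.maxHeartbeats 1000000
set_option maxHeartbeats 1000000

set_option synthInstance.maxHeartbeats 1000000
set_option maxHeartbeats 1000000

variable {𝓗 : Type*} [NormedAddCommGroup 𝓗] [InnerProductSpace ℂ 𝓗] [CompleteSpace 𝓗]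

/-- Heisenberg evolution `τ_t^H(A) = e^{itH} A e^{−itH}` of a bounded operator `A`
under a bounded Hamiltonian `H`. -/
noncomputable def heisenberg (H : 𝓗 →L[ℂ] 𝓗) (t : ℝ) (A : 𝓗 →L[ℂ] 𝓗) : 𝓗 →L[ℂ] 𝓗 :=
  NormedSpace.exp ((Complex.I * (t : ℂ)) • H) * A *
    NormedSpace.exp (-((Complex.I * (t : ℂ)) • H))

/-- The commutator `[A, B] = AB − BA` of two bounded operators. -/
def commutatorCLM (A B : 𝓗 →L[ℂ] 𝓗) : 𝓗 →L[ℂ] 𝓗 := A * B - B * A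

lemma exp_form (H : 𝓗 →L[ℂ] 𝓗) (s : ℝ) :
    NormedSpace.exp ((Complex.I * (s:ℂ)) • H) = NormedSpace.exp (s • (Complex.I • H)) := by
  congr 1
  rw [smul_comm s Complex.I H, ← algebraMap_smul ℂ s H, smul_smul]
  norm_num

lemma heis_eq (H O : 𝓗 →L[ℂ] 𝓗) (s : ℝ) :
    heisenberg H s O = NormedSpace.exp (s • (Complex.I • H)) * O *
      NormedSpace.exp ((-s) • (Complex.I • H)) := by
  unfold heisenberg
  rw [exp_form H s, ← exp_form H (-s)]
  congr 2
  push_cast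
  rw [← neg_smul]
  ring_nf

lemma exp_mul_exp_neg' (B : 𝓗 →L[ℂ] 𝓗) (s : ℝ) :
    NormedSpace.exp (s • B) * NormedSpace.exp ((-s) • B) = 1 := by
  let +nondep : NormedAlgebra ℚ (𝓗 →L[ℂ] 𝓗) := .restrictScalars ℚ ℂ _
  rw [← NormedSpace.exp_add_of_commute (((Commute.refl B).smul_left s).smul_right (-s))]
  rw [← add_smul]
  simp [NormedSpace.exp_zero]

lemma norm_exp_le_one' (H : 𝓗 →L[ℂ] 𝓗) (hH : IsSelfAdjoint H) (s : ℝ) :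
    ‖NormedSpace.exp (s • (Complex.I • H))‖ ≤ 1 := by
  set u := NormedSpace.exp (s • (Complex.I • H)) with hu
  have hstar : star u = NormedSpace.exp ((-s) • (Complex.I • H)) := by
    rw [hu, NormedSpace.star_exp]
    congr 1
    rw [star_smul, star_smul, hH.star_eq]
    simp [neg_smul]
  have h1 : u * star u = 1 := by rw [hstar]; exact exp_mul_exp_neg' _ s
  have h2 : ‖u * star u‖ = ‖u‖ * ‖u‖ := by
    rw [CStarRing.norm_self_mul_star]
  have h3 : ‖(1 : 𝓗 →L[ℂ] 𝓗)‖ ≤ 1 := ContinuousLinearMap.norm_id_le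
  nlinarith [norm_nonneg u, h1 ▸ h2]

lemma hasDerivAt_exp_neg_smul (B : 𝓗 →L[ℂ] 𝓗) (s : ℝ) :
    HasDerivAt (fun u : ℝ => NormedSpace.exp ((-u) • B))
      (-(B * NormedSpace.exp ((-s) • B))) s := by
  have h1 := hasDerivAt_exp_smul_const' (𝕂 := ℝ) B (-s)
  have h2 : HasDerivAt (fun u : ℝ => -u) (-1) s := (hasDerivAt_id s).neg
  have := h1.scomp s h2
  simpa [Function.comp_def, neg_smul] using this

lemma hasDerivAt_conj_exp (B : 𝓗 →L[ℂ] 𝓗) (P : ℝ → (𝓗 →L[ℂ] 𝓗)) (P' : 𝓗 →L[ℂ] 𝓗) (s : ℝ)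
    (hP : HasDerivAt P P' s) :
    HasDerivAt (fun u : ℝ => NormedSpace.exp ((-u) • B) * P u * NormedSpace.exp (u • B))
      (NormedSpace.exp ((-s) • B) * (P' + (P s * B - B * P s)) * NormedSpace.exp (s • B))
      s := by
  have hE : HasDerivAt (fun u : ℝ => NormedSpace.exp (u • B))
      (NormedSpace.exp (s • B) * B) s := hasDerivAt_exp_smul_const B s
  have h : HasDerivAt (fun u : ℝ => NormedSpace.exp ((-u) • B) * P u * NormedSpace.exp (u • B)) _ s :=
    ((hasDerivAt_exp_neg_smul B s).mul hP).mul hE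
  convert h using 1
  have hc : Commute B (NormedSpace.exp (s • B)) :=
    (((Commute.refl B).smul_right s).exp_right)
  have hc' : Commute B (NormedSpace.exp ((-s) • B)) :=
    (((Commute.refl B).smul_right (-s)).exp_right)
  simp only [Pi.mul_apply, mul_add, add_mul, mul_sub, sub_mul, neg_mul, mul_neg, mul_assoc]
  rw [show B * (NormedSpace.exp ((-s) • B) * (P s * NormedSpace.exp (s • B)))
        = NormedSpace.exp ((-s) • B) * (B * (P s * NormedSpace.exp (s • B))) from by
      rw [← mul_assoc, hc'.eq, mul_assoc]]
  rw [← hc.eq]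
  abel

lemma hasDerivAt_heis (B O : 𝓗 →L[ℂ] 𝓗) (s : ℝ) :
    HasDerivAt (fun u : ℝ => NormedSpace.exp (u • B) * O * NormedSpace.exp ((-u) • B))
      (B * (NormedSpace.exp (s • B) * O * NormedSpace.exp ((-s) • B))
        - (NormedSpace.exp (s • B) * O * NormedSpace.exp ((-s) • B)) * B) s := by
  have h := hasDerivAt_conj_exp (-B) (fun _ => O) 0 s (hasDerivAt_const s O)
  have hc : Commute B (NormedSpace.exp (s • B)) :=
    (((Commute.refl B).smul_right s).exp_right)
  have hc' : Commute B (NormedSpace.exp ((-s) • B)) :=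
    (((Commute.refl B).smul_right (-s)).exp_right)
  simp only [smul_neg, neg_neg, neg_smul, mul_neg, neg_mul, zero_add] at h ⊢
  convert h using 1
  simp only [mul_add, add_mul, mul_sub, sub_mul, neg_mul, mul_neg, mul_assoc, sub_neg_eq_add]
  rw [show B * (NormedSpace.exp (s • B) * (O * NormedSpace.exp (-(s • B))))
        = NormedSpace.exp (s • B) * (B * (O * NormedSpace.exp (-(s • B)))) from by
      rw [← mul_assoc, ← neg_smul] at *
      rw [hc.eq, mul_assoc]]
  rw [show NormedSpace.exp (-(s • B)) * B = B * NormedSpace.exp (-(s • B)) from by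
      rw [← neg_smul]; exact hc'.eq.symm]
  abel

theorem operator_difference_bound (H₁ H₂ O : 𝓗 →L[ℂ] 𝓗)
    (hH₁ : IsSelfAdjoint H₁) (hH₂ : IsSelfAdjoint H₂) (t : ℝ) (ht : 0 ≤ t) :
    ‖heisenberg H₁ t O - heisenberg H₂ t O‖ ≤
      ∫ s in (0 : ℝ)..t, ‖commutatorCLM (heisenberg H₂ s O) (H₁ - H₂)‖ := by
  set B₁ := Complex.I • H₁ with hB₁
  set B₂ := Complex.I • H₂ with hB₂
  set E₁ : ℝ → (𝓗 →L[ℂ] 𝓗) := fun u => NormedSpace.exp (u • B₁) with hE₁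
  set E₂ : ℝ → (𝓗 →L[ℂ] 𝓗) := fun u => NormedSpace.exp (u • B₂) with hE₂
  set A : ℝ → (𝓗 →L[ℂ] 𝓗) := fun u => E₂ u * O * E₂ (-u) with hA
  have hheisA : ∀ u : ℝ, heisenberg H₂ u O = A u := fun u => heis_eq H₂ O u
  set g : ℝ → (𝓗 →L[ℂ] 𝓗) := fun u => E₁ (-u) * A u * E₁ u with hgdef
  set G : ℝ → (𝓗 →L[ℂ] 𝓗) :=
    fun u => E₁ (-u) * (Complex.I • commutatorCLM (A u) (H₁ - H₂)) * E₁ u with hGdef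
  -- derivative of g
  have hg : ∀ u : ℝ, HasDerivAt g (G u) u := by
    intro u
    have hAd : HasDerivAt A (B₂ * A u - A u * B₂) u := hasDerivAt_heis B₂ O u
    have h := hasDerivAt_conj_exp B₁ A (B₂ * A u - A u * B₂) u hAd
    have hmid : B₂ * A u - A u * B₂ + (A u * B₁ - B₁ * A u)
        = Complex.I • commutatorCLM (A u) (H₁ - H₂) := by
      rw [commutatorCLM, hB₁, hB₂]
      simp only [smul_sub, mul_sub, sub_mul, smul_mul_assoc, mul_smul_comm]
      abel
    show HasDerivAt (fun u => E₁ (-u) * A u * E₁ u)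
      (E₁ (-u) * (Complex.I • commutatorCLM (A u) (H₁ - H₂)) * E₁ u) u
    rw [← hmid]
    exact h
  -- continuity of G
  let +nondep : NormedAlgebra ℚ (𝓗 →L[ℂ] 𝓗) := .restrictScalars ℚ ℂ _
  have hexp : ∀ B : 𝓗 →L[ℂ] 𝓗, Continuous fun u : ℝ => NormedSpace.exp (u • B) :=
    fun B => NormedSpace.exp_continuous.comp (continuous_id.smul continuous_const)
  have hE₁c : Continuous E₁ := hexp B₁
  have hE₂c : Continuous E₂ := hexp B₂
  have hE₁nc : Continuous fun u : ℝ => E₁ (-u) := hE₁c.comp continuous_neg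
  have hAc : Continuous A := ((hE₂c.mul continuous_const).mul (hE₂c.comp continuous_neg))
  have hcommc : Continuous fun u => commutatorCLM (A u) (H₁ - H₂) := by
    simp only [commutatorCLM]
    exact (hAc.mul continuous_const).sub (continuous_const.mul hAc)
  have hGc : Continuous G :=
    (hE₁nc.mul (hcommc.const_smul Complex.I)).mul hE₁c
  -- FTC
  have hFTC : ∫ u in (0:ℝ)..t, G u = g t - g 0 :=
    intervalIntegral.integral_eq_sub_of_hasDerivAt (fun s _ => hg s)
      (hGc.intervalIntegrable 0 t)
  -- norm bound on G
  have hGnorm : ∀ u : ℝ, ‖G u‖ ≤ ‖commutatorCLM (A u) (H₁ - H₂)‖ := by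
    intro u
    have h1 : ‖E₁ (-u)‖ ≤ 1 := norm_exp_le_one' H₁ hH₁ (-u)
    have h2 : ‖E₁ u‖ ≤ 1 := norm_exp_le_one' H₁ hH₁ u
    have hsm : ‖Complex.I • commutatorCLM (A u) (H₁ - H₂)‖
        = ‖commutatorCLM (A u) (H₁ - H₂)‖ := by
      rw [norm_smul, Complex.norm_I, one_mul]
    calc ‖G u‖ ≤ ‖E₁ (-u) * (Complex.I • commutatorCLM (A u) (H₁ - H₂))‖ * ‖E₁ u‖ :=
          norm_mul_le _ _
      _ ≤ ‖E₁ (-u)‖ * ‖Complex.I • commutatorCLM (A u) (H₁ - H₂)‖ * ‖E₁ u‖ := by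
          gcongr; exact norm_mul_le _ _
      _ ≤ 1 * ‖commutatorCLM (A u) (H₁ - H₂)‖ * 1 := by rw [hsm]; gcongr
      _ = ‖commutatorCLM (A u) (H₁ - H₂)‖ := by ring
  -- identity for the LHS
  have hg0 : g 0 = O := by
    simp [hgdef, hA, hE₁, hE₂, NormedSpace.exp_zero]
  have hcancel : ∀ X : 𝓗 →L[ℂ] 𝓗, E₁ t * (E₁ (-t) * X * E₁ t) * E₁ (-t) = X := by
    intro X
    have h1 : E₁ t * E₁ (-t) = 1 := exp_mul_exp_neg' B₁ t
    calc E₁ t * (E₁ (-t) * X * E₁ t) * E₁ (-t)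
        = (E₁ t * E₁ (-t)) * X * (E₁ t * E₁ (-t)) := by noncomm_ring
      _ = X := by rw [h1, one_mul, mul_one]
  have hLHS : heisenberg H₁ t O - heisenberg H₂ t O = E₁ t * (g 0 - g t) * E₁ (-t) := by
    rw [hg0, heis_eq H₁ O t, hheisA t, mul_sub, sub_mul, hcancel (A t)]
  -- put it together
  rw [hLHS]
  have h1 : ‖E₁ t‖ ≤ 1 := norm_exp_le_one' H₁ hH₁ t
  have h2 : ‖E₁ (-t)‖ ≤ 1 := norm_exp_le_one' H₁ hH₁ (-t)
  have step1 : ‖E₁ t * (g 0 - g t) * E₁ (-t)‖ ≤ ‖g 0 - g t‖ := by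
    calc ‖E₁ t * (g 0 - g t) * E₁ (-t)‖ ≤ ‖E₁ t * (g 0 - g t)‖ * ‖E₁ (-t)‖ := norm_mul_le _ _
      _ ≤ ‖E₁ t‖ * ‖g 0 - g t‖ * ‖E₁ (-t)‖ := by gcongr; exact norm_mul_le _ _
      _ ≤ 1 * ‖g 0 - g t‖ * 1 := by gcongr
      _ = ‖g 0 - g t‖ := by ring
  have step2 : ‖g 0 - g t‖ = ‖∫ u in (0:ℝ)..t, G u‖ := by
    rw [hFTC, norm_sub_rev]
  have step3 : ‖∫ u in (0:ℝ)..t, G u‖ ≤ ∫ u in (0:ℝ)..t, ‖G u‖ :=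
    intervalIntegral.norm_integral_le_integral_norm ht
  have step4 : (∫ u in (0:ℝ)..t, ‖G u‖) ≤ ∫ s in (0:ℝ)..t, ‖commutatorCLM (A s) (H₁ - H₂)‖ := by
    apply intervalIntegral.integral_mono_on ht (hGc.norm.intervalIntegrable 0 t)
      (hcommc.norm.intervalIntegrable 0 t)
    exact fun s _ => hGnorm s
  simp only [hheisA]
  linarith
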